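/- There is no packing of $K_{3(3)}$ (complete tripartite graph with parts of size 3) by five edge-disjoint copies of $K_4 - e$ whose leave is a path of length 2 (two adjacent edges). -/

import Mathlib

open SimpleGraph Finset

/-- `K₄ - e`: the complete graph on `{0,1,2,3}` minus the edge `{2,3}`.
In the block notation `[a,b,c-d]`, `a = 0`, `b = 1`, `c = 2`, `d = 3`. -/
def K4e : SimpleGraph (Fin 4) where
  Adj x y := x ≠ y ∧ ¬(x = 2 ∧ y = 3) ∧ ¬(x = 3 ∧ y = 2)
  symm := by
    constructor
    intro x y h
    exact ⟨h.1.symm, fun hc => h.2.2 ⟨hc.2, hc.1⟩, fun hc => h.2.1 ⟨hc.2, hc.1⟩⟩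
  loopless := ⟨fun x h => h.1 rfl⟩

instance : DecidableRel K4e.Adj :=
  fun x y => inferInstanceAs (Decidable (x ≠ y ∧ ¬(x = 2 ∧ y = 3) ∧ ¬(x = 3 ∧ y = 2)))

/-- The edge set of the copy of `K₄ - e` with vertices `f 0, f 1, f 2, f 3`. -/
def copyEdges {V : Type*} (f : Fin 4 → V) : Set (Sym2 V) :=
  Sym2.map f '' K4e.edgeSet

/-- `B` is a packing of `H` by edge-disjoint copies of `K₄ - e`. -/
def IsK4ePacking {V : Type*} (H : SimpleGraph V) (B : Finset (Fin 4 → V)) : Prop :=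
  (∀ f ∈ B, Function.Injective f) ∧
  (∀ f ∈ B, copyEdges f ⊆ H.edgeSet) ∧
  (∀ f ∈ B, ∀ g ∈ B, f ≠ g → Disjoint (copyEdges f) (copyEdges g))

/-- The leave of a packing: the edges of `H` covered by no copy. -/
def leave {V : Type*} (H : SimpleGraph V) (B : Finset (Fin 4 → V)) : Set (Sym2 V) :=
  H.edgeSet \ ⋃ f ∈ B, copyEdges f

/-- `B` is a decomposition of `H` into edge-disjoint copies of `K₄ - e`. -/
def IsK4eDecomp {V : Type*} (H : SimpleGraph V) (B : Finset (Fin 4 → V)) : Prop :=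
  IsK4ePacking H B ∧ ∀ e ∈ H.edgeSet, ∃ f ∈ B, e ∈ copyEdges f

/-- The complete tripartite graph with parts `{0,3,6}, {1,4,7}, {2,5,8}` on `Fin 9`. -/
def K3x3 : SimpleGraph (Fin 9) where
  Adj x y := x.val % 3 ≠ y.val % 3
  symm := ⟨fun _ _ h => h.symm⟩
  loopless := ⟨fun _ h => h rfl⟩

/- ### Auxiliary machinery -/

instance : DecidableRel K3x3.Adj :=
  fun x y => inferInstanceAs (Decidable (x.val % 3 ≠ y.val % 3))

lemma K4e_edgeSet : K4e.edgeSet = {s(0,1), s(0,2), s(0,3), s(1,2), s(1,3)} := by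
  ext e
  induction e using Sym2.inductionOn with
  | hf a b =>
    rw [SimpleGraph.mem_edgeSet]
    simp only [Set.mem_insert_iff, Set.mem_singleton_iff]
    revert a b; decide

/-- The edges of a copy, as a concrete finset. -/
def cE (f : Fin 4 → Fin 9) : Finset (Sym2 (Fin 9)) :=
  {s(f 0, f 1), s(f 0, f 2), s(f 0, f 3), s(f 1, f 2), s(f 1, f 3)}

lemma copyEdges_eq (f : Fin 4 → Fin 9) : copyEdges f = ↑(cE f) := by
  rw [copyEdges, K4e_edgeSet, cE]
  simp [Set.image_insert_eq, Sym2.map_pair_eq]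

lemma deg6 : ∀ v : Fin 9, (K3x3.edgeFinset.filter (fun e => v ∈ e)).card = 6 := by decide

lemma qr9 : ∀ v : Fin 9,
    (K3x3.edgeFinset.filter (fun e => ∀ w ∈ e, w.val % 3 ≠ v.val % 3)).card = 9 := by decide

lemma filter_cE_card (f : Fin 4 → Fin 9) (hf : Function.Injective f)
    (p : Sym2 (Fin 9) → Prop) [DecidablePred p] :
    ((cE f).filter p).card =
      (if p s(f 0, f 1) then 1 else 0) + (if p s(f 0, f 2) then 1 else 0) +
      (if p s(f 0, f 3) then 1 else 0) + (if p s(f 1, f 2) then 1 else 0) +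
      (if p s(f 1, f 3) then 1 else 0) := by
  have n01 : f 0 ≠ f 1 := fun h => absurd (hf h) (by decide)
  have n02 : f 0 ≠ f 2 := fun h => absurd (hf h) (by decide)
  have n03 : f 0 ≠ f 3 := fun h => absurd (hf h) (by decide)
  have n12 : f 1 ≠ f 2 := fun h => absurd (hf h) (by decide)
  have n13 : f 1 ≠ f 3 := fun h => absurd (hf h) (by decide)
  have n23 : f 2 ≠ f 3 := fun h => absurd (hf h) (by decide)
  rw [Finset.card_filter, cE]
  rw [Finset.sum_insert (by simp [Sym2.eq_iff]; tauto),
      Finset.sum_insert (by simp [Sym2.eq_iff]; tauto),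
      Finset.sum_insert (by simp [Sym2.eq_iff]; tauto),
      Finset.sum_insert (by simp [Sym2.eq_iff]; tauto),
      Finset.sum_singleton]
  ring

lemma card_at (f : Fin 4 → Fin 9) (hf : Function.Injective f) (y : Fin 9) :
    ((cE f).filter (fun e => y ∈ e)).card =
      3 * (if y = f 0 ∨ y = f 1 then 1 else 0) +
      2 * (if y = f 2 ∨ y = f 3 then 1 else 0) := by
  have n01 : f 0 ≠ f 1 := fun h => absurd (hf h) (by decide)
  have n02 : f 0 ≠ f 2 := fun h => absurd (hf h) (by decide)
  have n03 : f 0 ≠ f 3 := fun h => absurd (hf h) (by decide)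
  have n12 : f 1 ≠ f 2 := fun h => absurd (hf h) (by decide)
  have n13 : f 1 ≠ f 3 := fun h => absurd (hf h) (by decide)
  have n23 : f 2 ≠ f 3 := fun h => absurd (hf h) (by decide)
  rw [filter_cE_card f hf]
  simp only [Sym2.mem_iff]
  split_ifs <;> simp_all

lemma card_qr (f : Fin 4 → Fin 9) (hf : Function.Injective f) (y : Fin 9)
    (r01 : (f 0).val % 3 ≠ (f 1).val % 3) (r02 : (f 0).val % 3 ≠ (f 2).val % 3)
    (r03 : (f 0).val % 3 ≠ (f 3).val % 3) (r12 : (f 1).val % 3 ≠ (f 2).val % 3)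
    (r13 : (f 1).val % 3 ≠ (f 3).val % 3) :
    ((cE f).filter (fun e => ∀ w ∈ e, w.val % 3 ≠ y.val % 3)).card =
      if (f 2).val % 3 = y.val % 3 then 1 else 2 := by
  have h0 : (f 0).val % 3 < 3 := Nat.mod_lt _ (by norm_num)
  have h1 : (f 1).val % 3 < 3 := Nat.mod_lt _ (by norm_num)
  have h2 : (f 2).val % 3 < 3 := Nat.mod_lt _ (by norm_num)
  have h3 : (f 3).val % 3 < 3 := Nat.mod_lt _ (by norm_num)
  have hy : y.val % 3 < 3 := Nat.mod_lt _ (by norm_num)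
  rw [filter_cE_card f hf]
  simp only [Sym2.forall_mem_pair]
  split_ifs <;> omega

lemma part_card (B : Finset (Fin 4 → Fin 9)) (F : Finset (Sym2 (Fin 9)))
    (hd : ∀ f ∈ B, ∀ g ∈ B, f ≠ g → Disjoint (cE f) (cE g))
    (hcov : ∀ e ∈ F, ∃ f ∈ B, e ∈ cE f) :
    F.card = ∑ f ∈ B, ((cE f) ∩ F).card := by
  rw [← Finset.card_biUnion (fun f hf g hg hfg =>
    Finset.disjoint_left.mpr fun e he he' =>
      (Finset.disjoint_left.mp (hd f hf g hg hfg))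
        (Finset.mem_inter.mp he).1 (Finset.mem_inter.mp he').1)]
  congr 1
  ext e
  simp only [Finset.mem_biUnion, Finset.mem_inter]
  constructor
  · intro he
    obtain ⟨f, hf, hef⟩ := hcov e he
    exact ⟨f, hf, hef, he⟩
  · rintro ⟨f, _, _, he⟩; exact he

lemma arith1 (A C : ℕ) (h1 : 9 = A * 1 + C * 2) (h2 : A + C = 5) : A = 1 := by omega

lemma arith2 (S T K : ℕ) (h1 : 4 = 3 * S + 2 * T) (h2 : T ≤ K) (h3 : K = 1) : False := by omega

lemma pair_eq (a b c d : ℕ) (ha : a < 3) (hb : b < 3) (hc : c < 3) (hd : d < 3)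
    (r01 : a ≠ b) (r02 : a ≠ c) (r03 : a ≠ d) (r12 : b ≠ c) (r13 : b ≠ d) : c = d := by omega

theorem stmt7 :
    ¬ ∃ B : Finset (Fin 4 → Fin 9), B.card = 5 ∧ IsK4ePacking K3x3 B ∧
      ∃ x y z : Fin 9, x ≠ y ∧ y ≠ z ∧ x ≠ z ∧ leave K3x3 B = {s(x, y), s(y, z)} := by
  rintro ⟨B, hcard, ⟨hinj, hsub, hdisj⟩, x, y, z, hxy, hyz, hxz, hleave⟩
  -- basic consequences of the packing conditions
  have hsub' : ∀ f ∈ B, ∀ e ∈ cE f, e ∈ K3x3.edgeFinset := by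
    intro f hf e he
    exact SimpleGraph.mem_edgeFinset.mpr (hsub f hf (by rw [copyEdges_eq]; exact_mod_cast he))
  have hd' : ∀ f ∈ B, ∀ g ∈ B, f ≠ g → Disjoint (cE f) (cE g) := by
    intro f hf g hg hfg
    have := hdisj f hf g hg hfg
    rw [copyEdges_eq, copyEdges_eq, Finset.disjoint_coe] at this
    exact this
  -- adjacency facts for each copy
  have radj : ∀ f ∈ B, (f 0).val % 3 ≠ (f 1).val % 3 ∧ (f 0).val % 3 ≠ (f 2).val % 3 ∧
      (f 0).val % 3 ≠ (f 3).val % 3 ∧ (f 1).val % 3 ≠ (f 2).val % 3 ∧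
      (f 1).val % 3 ≠ (f 3).val % 3 := by
    intro f hf
    have h : ∀ e ∈ cE f, e ∈ K3x3.edgeSet := fun e he =>
      SimpleGraph.mem_edgeFinset.mp (hsub' f hf e he)
    refine ⟨h s(f 0, f 1) (by simp [cE]), h s(f 0, f 2) (by simp [cE]),
      h s(f 0, f 3) (by simp [cE]), h s(f 1, f 2) (by simp [cE]),
      h s(f 1, f 3) (by simp [cE])⟩
  -- leave facts
  have hleave' : K3x3.edgeSet \ (⋃ f ∈ B, copyEdges f) = {s(x, y), s(y, z)} := hleave
  have hxyL : s(x, y) ∈ K3x3.edgeSet \ (⋃ f ∈ B, copyEdges f) := by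
    rw [hleave']; left; rfl
  have hyzL : s(y, z) ∈ K3x3.edgeSet \ (⋃ f ∈ B, copyEdges f) := by
    rw [hleave']; right; rfl
  have hxyE : s(x, y) ∈ K3x3.edgeSet := hxyL.1
  have hyzE : s(y, z) ∈ K3x3.edgeSet := hyzL.1
  have hcov : ∀ e, e ∈ K3x3.edgeSet → e ≠ s(x, y) → e ≠ s(y, z) → ∃ f ∈ B, e ∈ cE f := by
    intro e heE h1 h2
    have hne : e ∉ K3x3.edgeSet \ (⋃ f ∈ B, copyEdges f) := by
      rw [hleave']
      rintro (h | h)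
      · exact h1 h
      · exact h2 h
    have hmem : e ∈ ⋃ f ∈ B, copyEdges f := by
      by_contra hc
      exact hne ⟨heE, hc⟩
    obtain ⟨f, hf, he⟩ := Set.mem_iUnion₂.mp hmem
    rw [copyEdges_eq] at he
    exact ⟨f, hf, by exact_mod_cast he⟩
  have hnl : ∀ f ∈ B, ∀ e ∈ cE f, e ≠ s(x, y) ∧ e ≠ s(y, z) := by
    intro f hf e he
    have hmem : e ∈ ⋃ g ∈ B, copyEdges g :=
      Set.mem_iUnion₂.mpr ⟨f, hf, by rw [copyEdges_eq]; exact_mod_cast he⟩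
    constructor
    · rintro rfl; exact hxyL.2 hmem
    · rintro rfl; exact hyzL.2 hmem
  -- Count the 9 edges avoiding the part of y: each copy covers 1 or 2 of them
  have hcovQR : ∀ e ∈ K3x3.edgeFinset.filter (fun e => ∀ w ∈ e, w.val % 3 ≠ y.val % 3),
      ∃ f ∈ B, e ∈ cE f := by
    intro e he
    rw [Finset.mem_filter] at he
    refine hcov e (SimpleGraph.mem_edgeFinset.mp he.1) ?_ ?_
    · rintro rfl
      exact he.2 y (by simp) rfl
    · rintro rfl
      exact he.2 y (by simp) rfl
  have hinterQR : ∀ f ∈ B,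
      cE f ∩ K3x3.edgeFinset.filter (fun e => ∀ w ∈ e, w.val % 3 ≠ y.val % 3) =
      (cE f).filter (fun e => ∀ w ∈ e, w.val % 3 ≠ y.val % 3) := by
    intro f hf
    ext e
    simp only [Finset.mem_inter, Finset.mem_filter]
    constructor
    · rintro ⟨h1, _, h3⟩; exact ⟨h1, h3⟩
    · rintro ⟨h1, h2⟩; exact ⟨h1, hsub' f hf e h1, h2⟩
  have hsumQR : (9 : ℕ) = ∑ f ∈ B, (if (f 2).val % 3 = y.val % 3 then 1 else 2) := by
    have h := part_card B
      (K3x3.edgeFinset.filter (fun e => ∀ w ∈ e, w.val % 3 ≠ y.val % 3)) hd' hcovQR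
    rw [qr9 y] at h
    refine h.trans (Finset.sum_congr rfl fun f hf => ?_)
    rw [hinterQR f hf]
    obtain ⟨r01, r02, r03, r12, r13⟩ := radj f hf
    exact card_qr f (hinj f hf) y r01 r02 r03 r12 r13
  -- hence exactly one copy has its degree-2 pair in y's part
  have hkval : (B.filter (fun f => (f 2).val % 3 = y.val % 3)).card = 1 := by
    rw [Finset.sum_ite, Finset.sum_const, Finset.sum_const, smul_eq_mul, smul_eq_mul] at hsumQR
    have hsplit := Finset.card_filter_add_card_filter_not
      (s := B) (p := fun f => (f 2).val % 3 = y.val % 3)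
    rw [hcard] at hsplit
    exact arith1 _ _ hsumQR hsplit
  -- Count the 4 covered edges at y : each copy covers 3, 2 or 0 of them
  have hne : s(x, y) ≠ s(y, z) := by
    intro h
    rw [Sym2.eq_iff] at h
    rcases h with ⟨rfl, rfl⟩ | ⟨rfl, -⟩
    · exact hxy rfl
    · exact hxz rfl
  have hFYcard :
      ((K3x3.edgeFinset.filter (fun e => y ∈ e)) \ {s(x, y), s(y, z)}).card = 4 := by
    rw [Finset.card_sdiff_of_subset]
    · rw [deg6 y, Finset.card_insert_of_notMem (by simpa using hne), Finset.card_singleton]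
    · intro e he
      simp only [Finset.mem_insert, Finset.mem_singleton] at he
      rcases he with rfl | rfl
      · exact Finset.mem_filter.mpr ⟨SimpleGraph.mem_edgeFinset.mpr hxyE, by simp⟩
      · exact Finset.mem_filter.mpr ⟨SimpleGraph.mem_edgeFinset.mpr hyzE, by simp⟩
  have hcovY : ∀ e ∈ (K3x3.edgeFinset.filter (fun e => y ∈ e)) \ {s(x, y), s(y, z)},
      ∃ f ∈ B, e ∈ cE f := by
    intro e he
    rw [Finset.mem_sdiff, Finset.mem_filter] at he
    simp only [Finset.mem_insert, Finset.mem_singleton] at he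
    exact hcov e (SimpleGraph.mem_edgeFinset.mp he.1.1) (fun h => he.2 (Or.inl h))
      (fun h => he.2 (Or.inr h))
  have hinterY : ∀ f ∈ B,
      cE f ∩ ((K3x3.edgeFinset.filter (fun e => y ∈ e)) \ {s(x, y), s(y, z)}) =
      (cE f).filter (fun e => y ∈ e) := by
    intro f hf
    ext e
    simp only [Finset.mem_inter, Finset.mem_sdiff, Finset.mem_filter,
      Finset.mem_insert, Finset.mem_singleton]
    constructor
    · rintro ⟨h1, ⟨_, h3⟩, _⟩; exact ⟨h1, h3⟩
    · rintro ⟨h1, h2⟩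
      refine ⟨h1, ⟨hsub' f hf e h1, h2⟩, ?_⟩
      rintro (rfl | rfl)
      · exact (hnl f hf _ h1).1 rfl
      · exact (hnl f hf _ h1).2 rfl
  have hsumY : (4 : ℕ) = ∑ f ∈ B, (3 * (if y = f 0 ∨ y = f 1 then 1 else 0) +
      2 * (if y = f 2 ∨ y = f 3 then 1 else 0)) := by
    have h := part_card B
      ((K3x3.edgeFinset.filter (fun e => y ∈ e)) \ {s(x, y), s(y, z)}) hd' hcovY
    rw [hFYcard] at h
    refine h.trans (Finset.sum_congr rfl fun f hf => ?_)
    rw [hinterY f hf]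
    exact card_at f (hinj f hf) y
  have hsumY' : (4 : ℕ) = 3 * (B.filter (fun f => y = f 0 ∨ y = f 1)).card +
      2 * (B.filter (fun f => y = f 2 ∨ y = f 3)).card := by
    refine hsumY.trans ?_
    rw [Finset.sum_add_distrib, ← Finset.mul_sum, ← Finset.mul_sum,
      ← Finset.card_filter, ← Finset.card_filter]
  -- copies containing y in the degree-2 pair have their pair in y's part
  have htk : (B.filter (fun f => y = f 2 ∨ y = f 3)).card ≤
      (B.filter (fun f => (f 2).val % 3 = y.val % 3)).card := by
    apply Finset.card_le_card
    intro f hf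
    rw [Finset.mem_filter] at hf ⊢
    obtain ⟨hfB, hy2⟩ := hf
    refine ⟨hfB, ?_⟩
    obtain ⟨r01, r02, r03, r12, r13⟩ := radj f hfB
    have h0 : (f 0).val % 3 < 3 := Nat.mod_lt _ (by norm_num)
    have h1 : (f 1).val % 3 < 3 := Nat.mod_lt _ (by norm_num)
    have h2 : (f 2).val % 3 < 3 := Nat.mod_lt _ (by norm_num)
    have h3 : (f 3).val % 3 < 3 := Nat.mod_lt _ (by norm_num)
    rcases hy2 with rfl | rfl
    · rfl
    · exact pair_eq _ _ _ _ h0 h1 h2 h3 r01 r02 r03 r12 r13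
  exact arith2 _ _ _ hsumY' htk hkval
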